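/- arXiv:2103.16464 — 6 statements merged into one kernel-verified Lean document; each statement's English description precedes it below -/
import Mathlib

section
/- Let f be a free deformation retraction of P onto Q, let F(x,t) = (f(x,t), t) and M := F(P × I). Then F is injective on F⁻¹(int M), where int M denotes the interior of M in the topological space P × I (with the subspace topology from E × ℝ). -/
open Set

/-- `f : E × ℝ → E` (restricted to `P × [0,1]`) is a free deformation retraction of the
compact set `P` onto `Q ⊆ P`. -/
def IsFreeDefRetr {E : Type*} [NormedAddCommGroup E] [NormedSpace ℝ E]
    (P Q : Set E) (f : E × ℝ → E) : Prop :=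
  ContinuousOn f (P ×ˢ Set.Icc (0 : ℝ) 1) ∧
  Set.MapsTo f (P ×ˢ Set.Icc (0 : ℝ) 1) P ∧
  (∀ x ∈ P, f (x, 0) = x) ∧
  f '' (P ×ˢ ({1} : Set ℝ)) = Q ∧
  (∀ q ∈ Q, ∀ t ∈ Set.Icc (0 : ℝ) 1, f (q, t) = q) ∧
  (∀ x ∈ P, ∀ s ∈ Set.Icc (0 : ℝ) 1, ∀ t ∈ Set.Icc (0 : ℝ) 1,
    f (f (x, s), t) = f (x, max s t))


/-- The interior of `N` within the subspace `X` (subspace topology):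
points of `X` having an ambient-open neighbourhood `V` with `V ∩ X ⊆ N`. -/
def interiorIn {α : Type*} [TopologicalSpace α] (X N : Set α) : Set α :=
  X ∩ {p | ∃ V : Set α, IsOpen V ∧ p ∈ V ∧ V ∩ X ⊆ N}

/-- `F` is injective on `F⁻¹ (int M)`, where `int M` is the interior of `M` in the
subspace `P × I` of `E × ℝ`. -/
theorem stmt_3 {E : Type*} [NormedAddCommGroup E] [NormedSpace ℝ E] [FiniteDimensional ℝ E]
    {P Q : Set E} (hP : IsCompact P) (hQP : Q ⊆ P)
    (f : E × ℝ → E) (hf : IsFreeDefRetr P Q f)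
    (F : E × ℝ → E × ℝ) (hF : ∀ p, F p = (f p, p.2))
    (M : Set (E × ℝ)) (hM : M = F '' (P ×ˢ Set.Icc (0 : ℝ) 1)) :
    Set.InjOn F
      ((P ×ˢ Set.Icc (0 : ℝ) 1) ∩ F ⁻¹' (interiorIn (P ×ˢ Set.Icc (0 : ℝ) 1) M)) := by
  obtain ⟨hcont, hmaps, hf0, hf1, hfq, hsemi⟩ := hf
  -- Key claim: if `F (x, s)` lies in the interior of `M` in `P × I`, then `x = f (x, s)`.
  have key : ∀ x s, x ∈ P → s ∈ Icc (0:ℝ) 1 →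
      F (x, s) ∈ interiorIn (P ×ˢ Icc (0:ℝ) 1) M → x = f (x, s) := by
    intro x s hx hs hint
    rw [hF] at hint
    obtain ⟨hzP, V, hV, hzV, hVsub⟩ := hint
    set z := f (x, s) with hz
    obtain ⟨ε, hε, hball⟩ := Metric.isOpen_iff.mp hV _ hzV
    -- every point of `P` within `ε` of `z` is fixed by `f (·, s)`
    have hfix : ∀ w ∈ P, dist w z < ε → f (w, s) = w := by
      intro w hw hwz
      have hwV : (w, s) ∈ V := by
        apply hball
        simp only [Metric.mem_ball, Prod.dist_eq, dist_self]
        exact max_lt hwz hε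
      have hwM : (w, s) ∈ M := hVsub ⟨hwV, hw, hs⟩
      rw [hM] at hwM
      obtain ⟨⟨v, u⟩, ⟨hv, hu⟩, hvu⟩ := hwM
      rw [hF] at hvu
      obtain ⟨h1, h2⟩ := Prod.ext_iff.mp hvu
      simp only at h1 h2
      subst h2
      have := hsemi v hv u hu u hu
      rw [max_self] at this
      rw [← h1, this, h1]
    by_contra hne
    -- `g t = f (x, t)` is continuous on `[0,1]`
    have hg : ContinuousOn (fun t => f (x, t)) (Icc (0:ℝ) 1) := by
      apply hcont.comp (Continuous.continuousOn (by fun_prop))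
      exact fun t ht => ⟨hx, ht⟩
    set S : Set ℝ := {t | t ∈ Icc 0 s ∧ f (x, t) = z} with hS
    have hSsub : S ⊆ Icc (0:ℝ) 1 := fun t ht => ⟨ht.1.1, ht.1.2.trans hs.2⟩
    have hSne : S.Nonempty := ⟨s, ⟨hs.1, le_refl s⟩, rfl⟩
    have hSbdd : BddBelow S := ⟨0, fun t ht => ht.1.1⟩
    have hSclosed : IsClosed S := by
      have : S = Icc 0 s ∩ ((fun t => f (x, t)) ⁻¹' {z}) := by
        ext t; simp [hS]
      rw [this]
      apply ContinuousOn.preimage_isClosed_of_isClosed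
        (hg.mono (fun t ht => ⟨ht.1, ht.2.trans hs.2⟩)) isClosed_Icc isClosed_singleton
    set t0 := sInf S with ht0def
    have ht0S : t0 ∈ S := hSclosed.csInf_mem hSne hSbdd
    have ht0pos : 0 < t0 := by
      rcases lt_or_eq_of_le ht0S.1.1 with h | h
      · exact h
      · exfalso; apply hne
        have : f (x, t0) = z := ht0S.2
        rw [← h, hf0 x hx] at this
        exact this.trans rfl
    have ht0I : t0 ∈ Icc (0:ℝ) 1 := hSsub ht0S
    -- continuity of `g` at `t0` within `[0,1]`
    have hcwa := Metric.continuousWithinAt_iff.mp (hg t0 ht0I) ε hε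
    obtain ⟨δ, hδ, hδ'⟩ := hcwa
    set t := max (t0 - δ/2) (t0/2) with htdef
    have htlt : t < t0 := by
      apply max_lt
      · linarith
      · linarith
    have htpos : 0 < t := lt_of_lt_of_le (by linarith) (le_max_right _ _)
    have hts : t ≤ s := le_of_lt (lt_of_lt_of_le htlt ht0S.1.2)
    have htI : t ∈ Icc (0:ℝ) 1 := ⟨htpos.le, hts.trans hs.2⟩
    have htdist : dist t t0 < δ := by
      rw [Real.dist_eq, abs_of_nonpos (by linarith)]
      have : t0 - δ/2 ≤ t := le_max_left _ _
      linarith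
    have hnear : dist (f (x, t)) z < ε := by
      have := hδ' htI htdist
      rwa [ht0S.2] at this
    set w := f (x, t) with hw
    have hwP : w ∈ P := hmaps ⟨hx, htI⟩
    have hwfix : f (w, s) = w := hfix w hwP hnear
    have hws : f (w, s) = z := by
      have := hsemi x hx t htI s hs
      rw [max_eq_right hts] at this
      exact this
    have hwz : w = z := hwfix.symm.trans hws
    -- contradiction with minimality of `t0`
    have : t ∈ S := ⟨⟨htpos.le, hts⟩, hwz⟩
    exact absurd (csInf_le hSbdd this) (not_le.mpr htlt)
  rintro ⟨x, s⟩ ⟨⟨hx, hsI⟩, hxi⟩ ⟨y, t⟩ ⟨⟨hy, htI⟩, hyi⟩ heq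
  have hst : s = t := by
    have := congrArg Prod.snd heq; simpa [hF] using this
  subst hst
  have hfxy : f (x, s) = f (y, s) := by
    have := congrArg Prod.fst heq; simpa [hF] using this
  have h1 := key x s hx hsI hxi
  have h2 := key y s hy htI hyi
  exact Prod.ext (h1.trans (hfxy.trans h2.symm)) rfl
end

section
/- Let f be a free deformation retraction of P onto Q, let F(x,t) = (f(x,t), t) and M := F(P × I). Then F⁻¹(int M) = int M, where int M denotes the interior of M in the topological space P × I. -/
open Set

/-- `F⁻¹ (int M) = int M`, where `int M` is the interior of `M` in the subspace `P × I`
and the preimage is taken inside the domain `P × I` of `F`. -/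
theorem stmt_4 {E : Type*} [NormedAddCommGroup E] [NormedSpace ℝ E] [FiniteDimensional ℝ E]
    {P Q : Set E} (hP : IsCompact P) (hQP : Q ⊆ P)
    (f : E × ℝ → E) (hf : IsFreeDefRetr P Q f)
    (F : E × ℝ → E × ℝ) (hF : ∀ p, F p = (f p, p.2))
    (M : Set (E × ℝ)) (hM : M = F '' (P ×ˢ Set.Icc (0 : ℝ) 1)) :
    (P ×ˢ Set.Icc (0 : ℝ) 1) ∩ F ⁻¹' (interiorIn (P ×ˢ Set.Icc (0 : ℝ) 1) M) =
      interiorIn (P ×ˢ Set.Icc (0 : ℝ) 1) M := by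

  obtain ⟨hcont, hmaps, hf0, hfQ, hq, hsemi⟩ := hf
  -- every point of M is a fixed point of F
  have hfix : ∀ p ∈ M, F p = p := by
    rintro p hp
    rw [hM] at hp
    obtain ⟨⟨x, s⟩, ⟨hx, hs⟩, rfl⟩ := hp
    rw [hF, hF]
    simp only
    have h1 : f (x, s) ∈ P := hmaps ⟨hx, hs⟩
    have h2 := hsemi x hx s hs s hs
    rw [max_self] at h2
    simp [h2]
  have hMPI : M ⊆ P ×ˢ Set.Icc (0:ℝ) 1 := by
    rintro p hp
    rw [hM] at hp
    obtain ⟨⟨x, s⟩, ⟨hx, hs⟩, rfl⟩ := hp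
    rw [hF]
    exact ⟨hmaps ⟨hx, hs⟩, hs⟩
  apply Set.Subset.antisymm
  · rintro ⟨x, t⟩ ⟨⟨hx, ht⟩, hpre⟩
    obtain ⟨hFPI, V, hV, hFV, hVM⟩ := hpre
    set y := f (x, t) with hy
    have hFp : F (x, t) = (y, t) := by rw [hF]
    rw [hFp] at hFPI hFV
    -- points of P near y at time t are fixed by f(·,t)
    have hfixnear : ∀ z ∈ P, (z, t) ∈ V → f (z, t) = z := by
      intro z hz hzV
      have hzM : (z, t) ∈ M := hVM ⟨hzV, hz, ht⟩
      have := hfix _ hzM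
      rw [hF] at this
      exact (Prod.ext_iff.mp this).1
    obtain ⟨ε, hε, hball⟩ := Metric.isOpen_iff.mp hV (y, t) hFV
    -- the path s ↦ f (x, s)
    set γ : ℝ → E := fun s => f (x, s) with hγdef
    have hγcont : ContinuousOn γ (Set.Icc 0 t) := by
      have h1 : Continuous (fun s : ℝ => ((x, s) : E × ℝ)) :=
        continuous_const.prodMk continuous_id
      exact hcont.comp h1.continuousOn fun s hs => ⟨hx, hs.1, hs.2.trans ht.2⟩
    have hγP : ∀ s ∈ Set.Icc (0:ℝ) t, γ s ∈ P := fun s hs =>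
      hmaps ⟨hx, hs.1, hs.2.trans ht.2⟩
    -- the set where the path equals y
    set T : Set ℝ := Set.Icc 0 t ∩ γ ⁻¹' {y} with hT
    have hTclosed : IsClosed T :=
      hγcont.preimage_isClosed_of_isClosed isClosed_Icc isClosed_singleton
    have htT : t ∈ T := ⟨⟨ht.1, le_refl t⟩, rfl⟩
    have hTne : T.Nonempty := ⟨t, htT⟩
    have hTbdd : BddBelow T := ⟨0, fun s hs => hs.1.1⟩
    have hs0T : sInf T ∈ T := hTclosed.csInf_mem hTne hTbdd
    set s₀ := sInf T with hs₀
    -- claim s₀ = 0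
    have hs00 : s₀ = 0 := by
      by_contra hne
      have hs0pos : 0 < s₀ := lt_of_le_of_ne hs0T.1.1 (Ne.symm hne)
      have hcw : ContinuousWithinAt γ (Set.Icc 0 t) s₀ := hγcont s₀ hs0T.1
      rw [Metric.continuousWithinAt_iff] at hcw
      obtain ⟨δ, hδ, hδprop⟩ := hcw ε hε
      set s' := max 0 (s₀ - δ/2) with hs'
      have hs'lt : s' < s₀ := by
        apply max_lt hs0pos
        linarith
      have hs'mem : s' ∈ Set.Icc 0 t := ⟨le_max_left _ _, hs'lt.le.trans hs0T.1.2⟩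
      have hdist : dist s' s₀ < δ := by
        rw [Real.dist_eq, abs_of_nonpos (by linarith [hs'lt.le])]
        have : s₀ - δ/2 ≤ s' := le_max_right _ _
        linarith
      have hnear : dist (γ s') (γ s₀) < ε := hδprop hs'mem hdist
      have hγs₀ : γ s₀ = y := hs0T.2
      rw [hγs₀] at hnear
      -- (γ s', t) ∈ ball((y,t), ε) ⊆ V
      have hmemV : (γ s', t) ∈ V := by
        apply hball
        rw [Metric.mem_ball, Prod.dist_eq]
        simp only [dist_self]
        exact max_lt hnear hε
      have hfixed : f (γ s', t) = γ s' := hfixnear _ (hγP s' hs'mem) hmemV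
      have hsemi' : f (γ s', t) = f (x, max s' t) :=
        hsemi x hx s' ⟨hs'mem.1, hs'mem.2.trans ht.2⟩ t ht
      rw [max_eq_right hs'mem.2] at hsemi'
      have : γ s' = y := by rw [← hfixed, hsemi']
      have hs'T : s' ∈ T := ⟨hs'mem, this⟩
      exact absurd (csInf_le hTbdd hs'T) (not_le.mpr hs'lt)
    -- so f (x, 0) = y, hence x = y
    have hxy : x = y := by
      have h0T : (0:ℝ) ∈ T := hs00 ▸ hs0T
      have : γ 0 = y := h0T.2
      rw [hγdef] at this
      simpa [hf0 x hx] using this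
    have hfixp : F (x, t) = (x, t) := by rw [hFp, ← hxy]
    refine ⟨⟨hx, ht⟩, V, hV, ?_, hVM⟩
    rw [← hxy] at hFV; exact hFV
  · rintro p hp
    have hPI : p ∈ P ×ˢ Set.Icc (0:ℝ) 1 := hp.1
    obtain ⟨-, V, hV, hpV, hVM⟩ := id hp
    have hpM : p ∈ M := hVM ⟨hpV, hPI⟩
    have hFpp := hfix p hpM
    exact ⟨hPI, by rw [Set.mem_preimage, hFpp]; exact hp⟩
end

section
/- Let f be a free deformation retraction of P onto Q. Let N₂ ⊆ N₁ ⊆ P × I with N₂ upward closed. Set D := f(N₁) \ f(N₂) and L := f⁻¹(D) ∩ N₁. Then f(S₋(L)) ∩ f(N₂) = ∅, where S₋(L) := {(x,t) ∈ P × I : ∃ s ∈ I, t ≤ s and (x,s) ∈ L} is the shadow of L. -/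
open Set

/-- Let `N₂ ⊆ N₁ ⊆ P × I` with `N₂` upward closed, `D := f '' N₁ \ f '' N₂`, and
`L := f⁻¹ D ∩ N₁`. Then `f '' S₋(L) ∩ f '' N₂ = ∅`, where
`S₋(L) = {(x,t) ∈ P × I | ∃ s ∈ I, t ≤ s ∧ (x,s) ∈ L}` is the shadow of `L`. -/
theorem stmt_5 {E : Type*} [NormedAddCommGroup E] [NormedSpace ℝ E] [FiniteDimensional ℝ E]
    {P Q : Set E} (hP : IsCompact P) (hQP : Q ⊆ P)
    (f : E × ℝ → E) (hf : IsFreeDefRetr P Q f)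
    (N₁ N₂ : Set (E × ℝ)) (hN21 : N₂ ⊆ N₁) (hN1 : N₁ ⊆ P ×ˢ Set.Icc (0 : ℝ) 1)
    (hN2up : ∀ (x : E) (t s : ℝ), (x, t) ∈ N₂ → t ≤ s → s ≤ 1 → (x, s) ∈ N₂)
    (D : Set E) (hD : D = f '' N₁ \ f '' N₂)
    (L : Set (E × ℝ)) (hL : L = f ⁻¹' D ∩ N₁)
    (Lsh : Set (E × ℝ))
    (hLsh : Lsh = {p : E × ℝ | p ∈ P ×ˢ Set.Icc (0 : ℝ) 1 ∧
      ∃ s ∈ Set.Icc (0 : ℝ) 1, p.2 ≤ s ∧ (p.1, s) ∈ L}) :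
    f '' Lsh ∩ f '' N₂ = ∅ := by
  obtain ⟨hcont, hmaps, h0, h1, hfix, hsemi⟩ := hf
  ext y
  simp only [mem_inter_iff, mem_empty_iff_false, iff_false]
  rintro ⟨⟨⟨x, t⟩, hxt, rfl⟩, ⟨⟨z, u⟩, hzu, hyz⟩⟩
  rw [hLsh] at hxt
  obtain ⟨hxtP, s, hsI, hts, hxsL⟩ := hxt
  rw [hL] at hxsL
  obtain ⟨hxsD, hxsN1⟩ := hxsL
  rw [hD] at hxsD
  have hxP : x ∈ P := hxtP.1
  have htI : t ∈ Set.Icc (0:ℝ) 1 := hxtP.2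
  have hzuP := hN1 (hN21 hzu)
  have hzP : z ∈ P := hzuP.1
  have huI : u ∈ Set.Icc (0:ℝ) 1 := hzuP.2
  -- f (x, s) = f (f (x, t), s) = f (f (z, u), s) = f (z, max u s) ∈ f '' N₂
  have key : f (x, s) = f (z, max u s) := by
    have e1 : f (f (x, t), s) = f (x, max t s) := hsemi x hxP t htI s hsI
    have e2 : f (f (z, u), s) = f (z, max u s) := hsemi z hzP u huI s hsI
    rw [max_eq_right hts] at e1
    rw [← e1, ← hyz, e2]
  have hmem : (z, max u s) ∈ N₂ :=
    hN2up z u (max u s) hzu (le_max_left _ _) (max_le huI.2 hsI.2)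
  exact hxsD.2 ⟨(z, max u s), hmem, key.symm ▸ rfl⟩
end

section
/- Let x₀, x₁, …, xₙ (n ≥ 1) be affinely independent points of E, let A := conv{x₀, …, xₙ} and let B := conv{x₁, …, xₙ} be the face of A opposite the vertex x₀. Suppose Q ⊆ E is compact, P := Q ∪ A, and Q ∩ A = A \ (ri A ∪ ri B), where ri denotes the relative (intrinsic) interior. Then there exists a free deformation retraction h : P × I → P of P onto Q, i.e. a continuous map with h(x,0) = x for all x ∈ P, h(P × {1}) = Q, h(q,t) = q for all q ∈ Q and t ∈ I, and h(h(x,s),t) = h(x, max(s,t)) for all x ∈ P and s,t ∈ I. -/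
open Set

private lemma continuousOn_union_closed' {X Y : Type*} [TopologicalSpace X] [TopologicalSpace Y]
    {f : X → Y} {s t : Set X} (hs : IsClosed s) (ht : IsClosed t)
    (hfs : ContinuousOn f s) (hft : ContinuousOn f t) : ContinuousOn f (s ∪ t) := by
  intro x hx
  have Hs : ContinuousWithinAt f s x := by
    by_cases h : x ∈ s
    · exact hfs x h
    · exact continuousWithinAt_of_notMem_closure (by rwa [hs.closure_eq])
  have Ht : ContinuousWithinAt f t x := by
    by_cases h : x ∈ t
    · exact hft x h
    · exact continuousWithinAt_of_notMem_closure (by rwa [ht.closure_eq])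
  exact Hs.union Ht

private lemma max_add_identity' (a s t : ℝ) :
    max (s - a) 0 + max (t - max a s) 0 = max (max s t - a) 0 := by
  rcases le_total s a with h1 | h1 <;> rcases le_total t a with h2 | h2 <;>
    rcases le_total t s with h3 | h3 <;>
    simp [max_eq_left, max_eq_right, sub_nonpos.mpr, sub_nonneg.mpr, *] <;>
    nlinarith [le_max_left s t, le_max_right s t]

private lemma free_core {E : Type*} [NormedAddCommGroup E] [NormedSpace ℝ E]
    (A Q P : Set E) (hAc : IsClosed A) (hQc : IsClosed Q) (hP : P = Q ∪ A)
    (d : E) (u : E → ℝ) (hu : Continuous u)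
    (hu0 : ∀ y ∈ A, 0 ≤ u y) (hu1 : ∀ y ∈ A, u y ≤ 1)
    (hflow : ∀ y ∈ A, ∀ τ : ℝ, 0 ≤ τ → τ ≤ 1 - u y → y + τ • d ∈ A ∧ u (y + τ • d) = u y + τ)
    (hexit : ∀ y ∈ A, (u y = 1 ↔ y ∈ Q)) :
    ∃ h : E × ℝ → E, IsFreeDefRetr P Q h := by
  classical
  set f : E × ℝ → E := fun p => if p.1 ∈ A then p.1 + max (p.2 - u p.1) 0 • d else p.1 with hf
  have hfA : ∀ y ∈ A, ∀ t : ℝ, f (y, t) = y + max (t - u y) 0 • d := by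
    intro y hy t; simp only [hf, hy, if_pos]
  have hfN : ∀ y, y ∉ A → ∀ t : ℝ, f (y, t) = y := by
    intro y hy t; simp only [hf, hy, if_neg, ite_false]
  have key : ∀ y ∈ A, ∀ t : ℝ, t ≤ 1 → f (y, t) ∈ A ∧ u (f (y, t)) = max (u y) t := by
    intro y hy t ht
    have h0 : (0:ℝ) ≤ max (t - u y) 0 := le_max_right _ _
    have h1 : max (t - u y) 0 ≤ 1 - u y := by
      apply max_le (by linarith) (by linarith [hu1 y hy])
    obtain ⟨hmem, hval⟩ := hflow y hy _ h0 h1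
    rw [hfA y hy t]
    refine ⟨hmem, ?_⟩
    rw [hval]
    have h2 : max (t - u y) 0 = max t (u y) - u y := by
      rcases le_total t (u y) with h | h
      · rw [max_eq_right (sub_nonpos.mpr h), max_eq_right h]; ring
      · rw [max_eq_left (sub_nonneg.mpr h), max_eq_left h]
    rw [h2, max_comm t (u y)]; ring
  have hQfix : ∀ q ∈ Q, ∀ t : ℝ, t ≤ 1 → f (q, t) = q := by
    intro q hq t ht
    by_cases hqA : q ∈ A
    · rw [hfA q hqA t]
      have h3 : u q = 1 := (hexit q hqA).mpr hq
      rw [h3]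
      have : max (t - 1) 0 = 0 := max_eq_right (by linarith)
      rw [this, zero_smul, add_zero]
    · exact hfN q hqA t
  refine ⟨f, ?_, ?_, ?_, ?_, ?_, ?_⟩
  · have hg : Continuous fun p : E × ℝ => p.1 + max (p.2 - u p.1) 0 • d := by
      apply continuous_fst.add
      exact (((continuous_snd.sub (hu.comp continuous_fst)).max continuous_const).smul
        continuous_const)
    have hA' : ContinuousOn f (A ×ˢ (univ : Set ℝ)) := by
      apply hg.continuousOn.congr
      rintro ⟨y, t⟩ ⟨hy, -⟩
      exact hfA y hy t
    have hQ' : ContinuousOn f (Q ×ˢ (Iic (1:ℝ))) := by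
      apply continuousOn_fst.congr
      rintro ⟨y, t⟩ ⟨hy, ht⟩
      exact hQfix y hy t ht
    have hsub : P ×ˢ Icc (0:ℝ) 1 ⊆ (A ×ˢ (univ : Set ℝ)) ∪ (Q ×ˢ (Iic (1:ℝ))) := by
      rintro ⟨y, t⟩ ⟨hy, ht0, ht1⟩
      rw [hP] at hy
      rcases hy with hy | hy
      · exact Or.inr ⟨hy, ht1⟩
      · exact Or.inl ⟨hy, trivial⟩
    exact (continuousOn_union_closed' (hAc.prod isClosed_univ) (hQc.prod isClosed_Iic)
      hA' hQ').mono hsub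
  · rintro ⟨y, t⟩ ⟨hy, ht0, ht1⟩
    by_cases hyA : y ∈ A
    · have := (key y hyA t ht1).1
      rw [hP]; exact Or.inr this
    · rw [hfN y hyA t]; exact hy
  · intro y hy
    by_cases hyA : y ∈ A
    · rw [hfA y hyA 0]
      have : max (0 - u y) 0 = 0 := max_eq_right (by linarith [hu0 y hyA])
      rw [this, zero_smul, add_zero]
    · exact hfN y hyA 0
  · apply Subset.antisymm
    · rintro - ⟨⟨y, t⟩, ⟨hy, (ht : t = 1)⟩, rfl⟩
      subst ht
      by_cases hyA : y ∈ A
      · obtain ⟨hmem, hval⟩ := key y hyA 1 le_rfl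
        have : u (f (y, 1)) = 1 := by rw [hval]; exact max_eq_right (hu1 y hyA)
        exact (hexit _ hmem).mp this
      · rw [hfN y hyA 1]
        rw [hP] at hy
        rcases hy with hy | hy
        · exact hy
        · exact absurd hy hyA
    · intro q hq
      refine ⟨(q, 1), ⟨by rw [hP]; exact Or.inl hq, rfl⟩, hQfix q hq 1 le_rfl⟩
  · intro q hq t ht
    exact hQfix q hq t ht.2
  · rintro y hy s ⟨hs0, hs1⟩ t ⟨ht0, ht1⟩
    by_cases hyA : y ∈ A
    · obtain ⟨hzA, hzu⟩ := key y hyA s hs1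
      rw [hfA _ hzA t, hzu, hfA y hyA s, hfA y hyA (max s t)]
      rw [add_assoc, ← add_smul, max_add_identity' (u y) s t]
    · rw [hfN y hyA s, hfN y hyA t, hfN y hyA (max s t)]

private lemma mem_convexHull_range_iff' {E : Type*} [AddCommGroup E] [Module ℝ E]
    {ι : Type*} [Fintype ι] (p : ι → E) (y : E) :
    y ∈ convexHull ℝ (Set.range p) ↔
      ∃ w : ι → ℝ, (∀ i, 0 ≤ w i) ∧ ∑ i, w i = 1 ∧ ∑ i, w i • p i = y := by
  classical
  rw [convexHull_range_eq_exists_affineCombination]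
  constructor
  · rintro ⟨s, w, hw0, hw1, rfl⟩
    refine ⟨fun i => if i ∈ s then w i else 0, ?_, ?_, ?_⟩
    · intro i; by_cases h : i ∈ s <;> simp [h, hw0 i]
    · rw [Finset.sum_ite_mem, Finset.univ_inter, hw1]
    · rw [Finset.affineCombination_eq_linear_combination s p w hw1]
      rw [show (∑ i : ι, (fun i => if i ∈ s then w i else 0) i • p i)
            = ∑ i : ι, (if i ∈ s then w i • p i else 0) by
          congr 1; funext i; by_cases h : i ∈ s <;> simp [h]]
      rw [Finset.sum_ite_mem, Finset.univ_inter]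
  · rintro ⟨w, hw0, hw1, rfl⟩
    exact ⟨Finset.univ, w, fun i _ => hw0 i, hw1,
      Finset.affineCombination_eq_linear_combination _ p w hw1⟩

private lemma finset_inf'_sub' {ι : Type*} {s : Finset ι} (hne : s.Nonempty) (f : ι → ℝ) (c : ℝ) :
    s.inf' hne (fun i => f i - c) = s.inf' hne f - c := by
  apply le_antisymm
  · obtain ⟨i, hi, h⟩ := Finset.exists_mem_eq_inf' hne f
    calc s.inf' hne (fun i => f i - c) ≤ f i - c := Finset.inf'_le _ hi
    _ = s.inf' hne f - c := by rw [h]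
  · exact Finset.le_inf' _ _ fun i hi => sub_le_sub_right (Finset.inf'_le _ hi) c


set_option maxHeartbeats 2000000 in
/-- If `A = conv {x₀, …, xₙ}` (`n ≥ 1`, the `xᵢ` affinely independent) with
`B = conv {x₁, …, xₙ}` the face opposite `x₀`, `Q` is compact, `P = Q ∪ A` and
`Q ∩ A = A \ (ri A ∪ ri B)`, then there is a free deformation retraction of `P` onto `Q`
(this is an elementary collapse `P ↘ Q` across `A` from the free face `B`). -/
theorem stmt_7 {E : Type*} [NormedAddCommGroup E] [NormedSpace ℝ E] [FiniteDimensional ℝ E]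
    {n : ℕ} (hn : 1 ≤ n) (x : Fin (n + 1) → E) (hx : AffineIndependent ℝ x)
    (A B : Set E) (hA : A = convexHull ℝ (Set.range x))
    (hB : B = convexHull ℝ (x '' {i | i ≠ 0}))
    (Q P : Set E) (hQ : IsCompact Q) (hP : P = Q ∪ A)
    (hQA : Q ∩ A = A \ (intrinsicInterior ℝ A ∪ intrinsicInterior ℝ B)) :
    ∃ h : E × ℝ → E, IsFreeDefRetr P Q h := by
  classical
  have hn0 : (n : ℝ) ≠ 0 := Nat.cast_ne_zero.mpr (by omega)
  have hnpos : (0:ℝ) < n := by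
    have : (0:ℕ) < n := by omega
    exact_mod_cast this
  haveI : Nonempty (Fin n) := ⟨⟨0, by omega⟩⟩
  set x0 : E := x 0 with hx0def
  set xs : Fin n → E := fun i => x i.succ with hxsdef
  set v : Fin n → E := fun i => xs i - x0 with hvdef
  have hxsv : ∀ i, xs i = v i + x0 := fun i => by simp [hvdef]
  have himg : x '' {i | i ≠ 0} = Set.range xs := by
    ext y; constructor
    · rintro ⟨i, hi, rfl⟩
      exact ⟨i.pred hi, by simp [hxsdef, Fin.succ_pred]⟩
    · rintro ⟨j, rfl⟩
      exact ⟨j.succ, Fin.succ_ne_zero j, rfl⟩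
  have hx' := (affineIndependent_iff_linearIndependent_vsub ℝ x 0).mp hx
  have hvli : LinearIndependent ℝ v := by
    have hinj : Function.Injective
        (fun j : Fin n => (⟨j.succ, Fin.succ_ne_zero j⟩ : {i : Fin (n+1) // i ≠ 0})) := by
      intro a b hab
      have := congrArg (fun z => z.1) hab
      simpa [Fin.succ_inj] using this
    have h2 := hx'.comp _ hinj
    have h3 : (fun i : {j : Fin (n+1) // j ≠ 0} => x ↑i -ᵥ x 0) ∘
        (fun j : Fin n => (⟨j.succ, Fin.succ_ne_zero j⟩ : {i : Fin (n+1) // i ≠ 0})) = v := by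
      funext j
      simp [hvdef, hxsdef, hx0def, vsub_eq_sub]
    rwa [h3] at h2
  have hrangev : Set.range (fun i : {j : Fin (n+1) // j ≠ 0} => x ↑i -ᵥ x 0) = Set.range v := by
    ext w; constructor
    · rintro ⟨⟨i, hi⟩, rfl⟩
      exact ⟨i.pred hi, by simp [hvdef, hxsdef, hx0def, Fin.succ_pred, vsub_eq_sub]⟩
    · rintro ⟨j, rfl⟩
      exact ⟨⟨j.succ, Fin.succ_ne_zero j⟩, by simp [hvdef, hxsdef, hx0def, vsub_eq_sub]⟩
  have hspanv : Submodule.span ℝ (Set.range v) = vectorSpan ℝ (Set.range x) := by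
    rw [vectorSpan_range_eq_span_range_vsub_right_ne ℝ x 0, hrangev]
  set S := affineSpan ℝ (Set.range x) with hSdef
  have hx0S : x0 ∈ S := mem_affineSpan ℝ (Set.mem_range_self 0)
  have hmemS : ∀ z : E, z ∈ S ↔ z - x0 ∈ Submodule.span ℝ (Set.range v) := by
    intro z
    rw [hspanv, ← direction_affineSpan ℝ (Set.range x)]
    constructor
    · intro hz
      have := AffineSubspace.vsub_mem_direction hz hx0S
      simpa [vsub_eq_sub] using this
    · intro hz
      have := AffineSubspace.vadd_mem_of_mem_direction hz hx0S
      simpa [vadd_eq_add, sub_add_cancel] using this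
  -- dual functionals
  obtain ⟨W, hW⟩ := Submodule.exists_isCompl (Submodule.span ℝ (Set.range v))
  set bV := Module.Basis.span hvli with hbVdef
  set pr := Submodule.linearProjOfIsCompl _ W hW with hprdef
  set g : Fin n → E →ₗ[ℝ] ℝ := fun i => (bV.coord i).comp pr with hgdef
  have hgv : ∀ i j, g i (v j) = if j = i then 1 else 0 := by
    intro i j
    have h1 : pr (v j) = bV j := by
      have h2 : (bV j : E) = v j := congrArg Subtype.val (Module.Basis.span_apply hvli j)
      have h3 : pr ((bV j : E)) = bV j := Submodule.linearProjOfIsCompl_apply_left hW (bV j)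
      rw [← h2]; exact h3
    simp only [hgdef, LinearMap.comp_apply, h1, Module.Basis.coord_apply, Module.Basis.repr_self]
    rw [Finsupp.single_apply]
  set L : Fin n → E → ℝ := fun i y => g i (y - x0) with hLdef
  set L0 : E → ℝ := fun y => 1 - ∑ i, L i y with hL0def
  have hLc : ∀ i, Continuous (L i) :=
    fun i => ((g i).continuous_of_finiteDimensional).comp (continuous_id.sub continuous_const)
  have hL0c : Continuous L0 :=
    continuous_const.sub (continuous_finset_sum _ fun i _ => hLc i)
  have hgsum : ∀ (c : Fin n → ℝ) (j), g j (∑ i, c i • v i) = c j := by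
    intro c j
    rw [map_sum]
    have : ∀ i : Fin n, g j (c i • v i) = if i = j then c i else 0 := by
      intro i
      rw [map_smul, hgv]
      by_cases h : i = j <;> simp [h]
    rw [Finset.sum_congr rfl fun i _ => this i]
    simp [Finset.sum_ite_eq']
  have hcombo : ∀ (c : Fin n → ℝ), (∑ i, c i • v i) + x0 = (1 - ∑ i, c i) • x0 + ∑ i, c i • xs i := by
    intro c
    have h1 : ∑ i, c i • xs i = (∑ i, c i • v i) + (∑ i, c i) • x0 := by
      rw [Finset.sum_smul]
      rw [← Finset.sum_add_distrib]
      congr 1; funext i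
      rw [hxsv i, smul_add]
    rw [h1, sub_smul, one_smul]
    abel
  have hrecon : ∀ z ∈ S, z = L0 z • x0 + ∑ i, L i z • xs i := by
    intro z hz
    obtain ⟨c, hc⟩ := (Submodule.mem_span_range_iff_exists_fun ℝ).mp ((hmemS z).mp hz)
    have hLc' : ∀ j, L j z = c j := by
      intro j
      simp only [hLdef]
      rw [← hc, hgsum]
    have hR : L0 z • x0 + ∑ i, L i z • xs i = (1 - ∑ i, c i) • x0 + ∑ i, c i • xs i := by
      congr 1
      · congr 1
        simp only [hL0def]
        congr 1
        exact Finset.sum_congr rfl fun i _ => (hLc' i)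
      · exact Finset.sum_congr rfl fun i _ => by rw [hLc' i]
    rw [hR, ← hcombo c, hc]
    abel
  have hwA : ∀ (w : Fin (n+1) → ℝ), ∑ i, w i = 1 → ∀ y : E, ∑ i, w i • x i = y →
      (∀ i : Fin n, L i y = w i.succ) ∧ L0 y = w 0 := by
    intro w hsum y hy
    have h1 : y - x0 = ∑ j : Fin n, w j.succ • v j := by
      calc y - x0 = (∑ i, w i • x i) - (∑ i, w i) • x0 := by rw [hy, hsum, one_smul]
      _ = ∑ i, (w i • x i - w i • x0) := by
          rw [Finset.sum_smul, ← Finset.sum_sub_distrib]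
      _ = ∑ i, w i • (x i - x0) := by
          congr 1; funext i; rw [← smul_sub]
      _ = w 0 • (x 0 - x0) + ∑ j : Fin n, w j.succ • (x j.succ - x0) := Fin.sum_univ_succ _
      _ = ∑ j : Fin n, w j.succ • v j := by
          simp [hvdef, hxsdef, hx0def]
    have hLval : ∀ i : Fin n, L i y = w i.succ := by
      intro i
      simp only [hLdef]
      rw [h1, hgsum]
    refine ⟨hLval, ?_⟩
    simp only [hL0def]
    have h3 : ∑ i : Fin n, L i y = ∑ i : Fin n, w i.succ :=
      Finset.sum_congr rfl fun i _ => hLval i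
    rw [h3]
    have h4 : w 0 + ∑ i : Fin n, w i.succ = 1 := by rw [← Fin.sum_univ_succ w, hsum]
    linarith
  have hAS : A ⊆ S := by
    rw [hA, hSdef]
    exact convexHull_subset_affineSpan _
  have hmemA : ∀ z : E, z ∈ A ↔ (z ∈ S ∧ (∀ i, 0 ≤ L i z) ∧ 0 ≤ L0 z) := by
    intro z
    constructor
    · intro hz
      have hzS : z ∈ S := hAS hz
      rw [hA] at hz
      obtain ⟨w, hw0, hw1, hwz⟩ := (mem_convexHull_range_iff' x z).mp hz
      obtain ⟨hLval, hL0val⟩ := hwA w hw1 z hwz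
      exact ⟨hzS, fun i => (hLval i) ▸ hw0 _, hL0val ▸ hw0 0⟩
    · rintro ⟨hzS, hL, hL0⟩
      rw [hA]
      refine (mem_convexHull_range_iff' x z).mpr
        ⟨Fin.cases (L0 z) (fun i => L i z), ?_, ?_, ?_⟩
      · intro i
        induction i using Fin.cases with
        | zero => simpa using hL0
        | succ j => simpa using hL j
      · rw [Fin.sum_univ_succ]
        simp only [Fin.cases_zero, Fin.cases_succ, hL0def]
        ring
      · rw [Fin.sum_univ_succ]
        simp only [Fin.cases_zero, Fin.cases_succ]
        exact (hrecon z hzS).symm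
  -- the face B
  have i0lt : 0 < n := hn
  set i0 : Fin n := ⟨0, i0lt⟩ with hi0def
  have hBeq : B = convexHull ℝ (Set.range xs) := by rw [hB, himg]
  set T := affineSpan ℝ (Set.range xs) with hTdef
  have hxs0T : xs i0 ∈ T := mem_affineSpan ℝ (Set.mem_range_self i0)
  have hTS : ∀ z ∈ T, z ∈ S ∧ L0 z = 0 := by
    intro z hz
    set G : E →ₗ[ℝ] ℝ := ∑ i, g i with hGdef
    have hGapp : ∀ w : E, G w = ∑ i, g i w := by
      intro w; simp [hGdef]
    have hKle : Submodule.span ℝ (Set.range fun j : Fin n => xs j -ᵥ xs i0) ≤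
        (Submodule.span ℝ (Set.range v)) ⊓ (LinearMap.ker G) := by
      rw [Submodule.span_le]
      rintro - ⟨j, rfl⟩
      have hjv : xs j -ᵥ xs i0 = v j - v i0 := by
        simp only [hvdef, vsub_eq_sub]
        abel
      show xs j -ᵥ xs i0 ∈ _
      rw [hjv]
      refine Submodule.mem_inf.mpr ⟨?_, ?_⟩
      · exact sub_mem (Submodule.subset_span ⟨j, rfl⟩) (Submodule.subset_span ⟨i0, rfl⟩)
      · rw [LinearMap.mem_ker, map_sub, hGapp, hGapp]
        have h5 : ∀ j : Fin n, ∑ i, g i (v j) = 1 := by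
          intro j
          rw [Finset.sum_congr rfl fun i _ => hgv i j]
          simp [Finset.sum_ite_eq']
        rw [h5, h5, sub_self]
    have hzw : z -ᵥ xs i0 ∈ T.direction :=
      AffineSubspace.vsub_mem_direction hz hxs0T
    rw [hTdef, direction_affineSpan, vectorSpan_range_eq_span_range_vsub_right ℝ xs i0] at hzw
    have hzw2 := hKle hzw
    obtain ⟨hzw3, hzw4⟩ := Submodule.mem_inf.mp hzw2
    have hz0 : z - x0 = (z -ᵥ xs i0) + v i0 := by
      simp only [hvdef, vsub_eq_sub]
      abel
    constructor
    · rw [hmemS, hz0]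
      exact add_mem hzw3 (Submodule.subset_span ⟨i0, rfl⟩)
    · simp only [hL0def, hLdef]
      have h6 : ∑ i, g i (z - x0) = ∑ i, g i (z -ᵥ xs i0) + ∑ i, g i (v i0) := by
        rw [hz0]
        rw [← Finset.sum_add_distrib]
        exact Finset.sum_congr rfl fun i _ => by rw [map_add]
      have h7 : ∑ i, g i (z -ᵥ xs i0) = 0 := by
        rw [← hGapp]
        exact LinearMap.mem_ker.mp hzw4
      have h8 : ∑ i, g i (v i0) = 1 := by
        rw [Finset.sum_congr rfl fun i _ => hgv i i0]
        simp [Finset.sum_ite_eq']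
      rw [h6, h7, h8]
      ring
  have hBA : B ⊆ A := by
    rw [hA, hB]
    exact convexHull_mono (Set.image_subset_range _ _)
  have hsumL : ∀ z : E, ∑ i, L i z = 1 - L0 z := by
    intro z; simp only [hL0def]; ring
  have hmemB_of : ∀ z : E, z ∈ S → L0 z = 0 → (∀ i, 0 ≤ L i z) → z ∈ B := by
    intro z hzS hz0 hzL
    rw [hBeq]
    refine (mem_convexHull_range_iff' xs z).mpr ⟨fun i => L i z, hzL, ?_, ?_⟩
    · rw [hsumL, hz0]; ring
    · have := hrecon z hzS
      rw [hz0, zero_smul, zero_add] at this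
      exact this.symm
  -- spans of A and B
  have hspanA : affineSpan ℝ A = S := by rw [hA, hSdef, affineSpan_convexHull]
  have hspanB : affineSpan ℝ B = T := by rw [hBeq, hTdef, affineSpan_convexHull]
  -- coordinates of distinguished points
  have hLxs : ∀ i j, L i (xs j) = if j = i then 1 else 0 := by
    intro i j
    simp only [hLdef]
    have : xs j - x0 = v j := by simp [hvdef]
    rw [this, hgv]
  have hLx0 : ∀ i, L i x0 = 0 := by
    intro i; simp only [hLdef, sub_self, map_zero]
  have hL0x0 : L0 x0 = 1 := by
    simp only [hL0def]
    rw [Finset.sum_congr rfl fun i _ => hLx0 i]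
    simp
  -- affinity along the push direction
  have haffL : ∀ (i : Fin n) (w z : E) (δ : ℝ),
      L i (w + δ • (w - z)) = L i w + δ * (L i w - L i z) := by
    intro i w z δ
    simp only [hLdef]
    have h9 : (w + δ • (w - z)) - x0 = (w - x0) + δ • ((w - x0) - (z - x0)) := by
      module
    rw [h9, map_add, map_smul, map_sub]
    simp [smul_eq_mul]
  have haffL0 : ∀ (w z : E) (δ : ℝ),
      L0 (w + δ • (w - z)) = L0 w + δ * (L0 w - L0 z) := by
    intro w z δ
    simp only [hL0def]
    rw [Finset.sum_congr rfl fun i _ => haffL i w z δ]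
    rw [Finset.sum_add_distrib, ← Finset.mul_sum, Finset.sum_sub_distrib]
    ring
  -- membership of the vertices
  have hxsA : ∀ i, xs i ∈ A := by
    intro i
    rw [hA]
    exact subset_convexHull ℝ _ (Set.mem_range_self i.succ)
  have hx0A : x0 ∈ A := by
    rw [hA]
    exact subset_convexHull ℝ _ (Set.mem_range_self 0)
  have hxsB : ∀ i, xs i ∈ B := by
    intro i
    rw [hBeq]
    exact subset_convexHull ℝ _ (Set.mem_range_self i)
  -- the witness trick, generic form
  have hwitness : ∀ (C : Set E) (hC : C ⊆ A) (y : E) (hy : y ∈ intrinsicInterior ℝ C)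
      (z : E) (hzC : z ∈ C) (φ : E → ℝ)
      (haff : ∀ (w' : E) (δ : ℝ), φ (w' + δ • (w' - z)) = φ w' + δ * (φ w' - φ z))
      (hnonneg : ∀ p ∈ C, 0 ≤ φ p) (hφz : φ z = 1), 0 < φ y := by
    intro C hC y hy z hzC φ haff hnonneg hφz
    obtain ⟨yh, hint, rfl⟩ := mem_intrinsicInterior.mp hy
    obtain ⟨ε, hε, hball⟩ := Metric.isOpen_iff.mp isOpen_interior yh hint
    have hball' : Metric.ball yh ε ⊆ (↑) ⁻¹' C := hball.trans interior_subset
    have hyC : (yh : E) ∈ C := by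
      have := hball' (Metric.mem_ball_self hε)
      exact this
    have h0 : 0 ≤ φ yh := hnonneg _ hyC
    rcases h0.lt_or_eq with h | h
    · exact h
    exfalso
    set N := ‖(yh:E) - z‖ with hNdef
    have hN : 0 ≤ N := norm_nonneg _
    set δ := ε / (2 * (N + 1)) with hδdef
    have hδ : 0 < δ := by positivity
    set p := (yh:E) + δ • ((yh:E) - z) with hpdef
    have hpspan : p ∈ affineSpan ℝ C := by
      have h1 : (yh:E) ∈ affineSpan ℝ C := yh.2
      have h2 : z ∈ affineSpan ℝ C := subset_affineSpan ℝ C hzC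
      have h3 := AffineSubspace.smul_vsub_vadd_mem (affineSpan ℝ C) δ h1 h2 h1
      have h4 : δ • ((yh:E) -ᵥ z) +ᵥ (yh:E) = p := by
        simp only [vsub_eq_sub, vadd_eq_add, hpdef]
        abel
      rwa [h4] at h3
    have hdist : (⟨p, hpspan⟩ : affineSpan ℝ C) ∈ Metric.ball yh ε := by
      rw [Metric.mem_ball, Subtype.dist_eq, dist_eq_norm]
      have h5 : p - (yh:E) = δ • ((yh:E) - z) := by
        simp only [hpdef]; abel
      rw [h5, norm_smul, Real.norm_eq_abs, abs_of_pos hδ, ← hNdef]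
      rw [hδdef]
      rw [div_mul_eq_mul_div, div_lt_iff₀ (by positivity)]
      nlinarith
    have hpC : p ∈ C := hball' hdist
    have h6 : 0 ≤ φ p := hnonneg _ hpC
    have h7 : φ p = -δ := by
      rw [hpdef, haff, ← h, hφz]
      ring
    rw [h7] at h6
    linarith
  -- relative interior of A: strictly positive coordinates
  have hriA : ∀ y ∈ intrinsicInterior ℝ A, (∀ i, 0 < L i y) ∧ 0 < L0 y := by
    intro y hy
    constructor
    · intro i
      refine hwitness A (fun _ h => h) y hy (xs i) (hxsA i) (L i) ?_ ?_ ?_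
      · intro w' δ; exact haffL i w' (xs i) δ
      · intro p hp; exact ((hmemA p).mp hp).2.1 i
      · rw [hLxs]; simp
    · refine hwitness A (fun _ h => h) y hy x0 hx0A L0 ?_ ?_ hL0x0
      · intro w' δ; exact haffL0 w' x0 δ
      · intro p hp; exact ((hmemA p).mp hp).2.2
  have hriB : ∀ y ∈ intrinsicInterior ℝ B, (∀ i, 0 < L i y) := by
    intro y hy i
    refine hwitness B hBA y hy (xs i) (hxsB i) (L i) ?_ ?_ ?_
    · intro w' δ; exact haffL i w' (xs i) δ
    · intro p hp; exact ((hmemA p).mp (hBA hp)).2.1 i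
    · rw [hLxs]; simp
  -- converse: strictly positive coordinates give relative interior points
  have hriAof : ∀ y ∈ A, (∀ i, 0 < L i y) → 0 < L0 y → y ∈ intrinsicInterior ℝ A := by
    intro y hy hL hL0
    refine mem_intrinsicInterior.mpr ⟨⟨y, subset_affineSpan ℝ A hy⟩, ?_, rfl⟩
    set O : Set (affineSpan ℝ A) := {zh | (∀ i, 0 < L i zh) ∧ 0 < L0 zh} with hOdef
    have hOopen : IsOpen O := by
      have h1 : IsOpen {zh : affineSpan ℝ A | ∀ i, 0 < L i zh} := by
        have : {zh : affineSpan ℝ A | ∀ i, 0 < L i zh}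
            = ⋂ i, {zh : affineSpan ℝ A | 0 < L i zh} := by
          ext; simp
        rw [this]
        exact isOpen_iInter_of_finite fun i =>
          isOpen_lt continuous_const ((hLc i).comp continuous_subtype_val)
      have h2 : IsOpen {zh : affineSpan ℝ A | 0 < L0 zh} :=
        isOpen_lt continuous_const (hL0c.comp continuous_subtype_val)
      exact h1.inter h2
    have hOsub : O ⊆ (↑) ⁻¹' A := by
      rintro zh ⟨h1, h2⟩
      have hzS : (zh:E) ∈ S := by rw [← hspanA]; exact zh.2
      exact (hmemA _).mpr ⟨hzS, fun i => (h1 i).le, h2.le⟩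
    exact interior_maximal hOsub hOopen ⟨hL, hL0⟩
  have hriBof : ∀ y ∈ A, L0 y = 0 → (∀ i, 0 < L i y) → y ∈ intrinsicInterior ℝ B := by
    intro y hy h0 hL
    have hyS : y ∈ S := ((hmemA y).mp hy).1
    have hyB : y ∈ B := hmemB_of y hyS h0 fun i => (hL i).le
    refine mem_intrinsicInterior.mpr ⟨⟨y, subset_affineSpan ℝ B hyB⟩, ?_, rfl⟩
    set O : Set (affineSpan ℝ B) := {zh | ∀ i, 0 < L i zh} with hOdef
    have hOopen : IsOpen O := by
      have : O = ⋂ i, {zh : affineSpan ℝ B | 0 < L i zh} := by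
        ext; simp [hOdef]
      rw [this]
      exact isOpen_iInter_of_finite fun i =>
        isOpen_lt continuous_const ((hLc i).comp continuous_subtype_val)
    have hOsub : O ⊆ (↑) ⁻¹' B := by
      rintro zh h1
      have hzT : (zh:E) ∈ T := by rw [← hspanB]; exact zh.2
      obtain ⟨hzS, hz0⟩ := hTS _ hzT
      exact hmemB_of _ hzS hz0 fun i => (h1 i).le
    exact interior_maximal hOsub hOopen hL
  -- the flow data
  set m : E → ℝ := fun y => Finset.univ.inf' Finset.univ_nonempty (fun i => L i y) with hmdef
  set u : E → ℝ := fun y => 1 - n * m y with hudef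
  set d : E := (-(n:ℝ)⁻¹) • ∑ i, v i with hddef
  have hAc : IsClosed A := by
    rw [hA]
    exact ((Set.finite_range x).isCompact_convexHull ℝ).isClosed
  have hu : Continuous u :=
    continuous_const.sub (continuous_const.mul
      (Continuous.finset_inf'_apply Finset.univ_nonempty (fun i _ => hLc i)))
  have hmle : ∀ y i, m y ≤ L i y := fun y i => Finset.inf'_le _ (Finset.mem_univ i)
  have hmex : ∀ y, ∃ i, m y = L i y := by
    intro y
    obtain ⟨i, _, h⟩ := Finset.exists_mem_eq_inf' Finset.univ_nonempty (fun i => L i y)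
    exact ⟨i, h⟩
  have hm0 : ∀ y ∈ A, 0 ≤ m y := by
    intro y hy
    obtain ⟨i, h⟩ := hmex y
    rw [h]
    exact ((hmemA y).mp hy).2.1 i
  have hnm : ∀ y ∈ A, (n:ℝ) * m y ≤ 1 - L0 y := by
    intro y hy
    have h1 : (n:ℝ) * m y ≤ ∑ i, L i y := by
      have h2 := Finset.card_nsmul_le_sum Finset.univ (fun i => L i y) (m y)
        (fun i _ => hmle y i)
      simpa [Finset.card_univ, nsmul_eq_mul] using h2
    rw [hsumL] at h1
    exact h1
  have hu0 : ∀ y ∈ A, 0 ≤ u y := by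
    intro y hy
    have h1 := hnm y hy
    have h2 := ((hmemA y).mp hy).2.2
    simp only [hudef]
    linarith
  have hu1 : ∀ y ∈ A, u y ≤ 1 := by
    intro y hy
    have h1 := hm0 y hy
    simp only [hudef]
    nlinarith
  have hgd : ∀ i, g i d = -(n:ℝ)⁻¹ := by
    intro i
    rw [hddef, map_smul, map_sum]
    rw [Finset.sum_congr rfl fun j _ => hgv i j]
    simp [Finset.sum_ite_eq', smul_eq_mul]
  have hLflow : ∀ (i : Fin n) (y : E) (τ : ℝ), L i (y + τ • d) = L i y - τ * (n:ℝ)⁻¹ := by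
    intro i y τ
    simp only [hLdef]
    rw [show y + τ • d - x0 = (y - x0) + τ • d by abel]
    rw [map_add, map_smul, hgd]
    simp [smul_eq_mul]
    ring
  have hmflow : ∀ (y : E) (τ : ℝ), m (y + τ • d) = m y - τ * (n:ℝ)⁻¹ := by
    intro y τ
    simp only [hmdef]
    rw [show (fun i => L i (y + τ • d)) = fun i => L i y - τ * (n:ℝ)⁻¹ from
      funext fun i => hLflow i y τ]
    exact finset_inf'_sub' _ _ _
  have huflow : ∀ (y : E) (τ : ℝ), u (y + τ • d) = u y + τ := by
    intro y τ
    simp only [hudef, hmflow]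
    field_simp
    ring
  have hL0flow : ∀ (y : E) (τ : ℝ), L0 (y + τ • d) = L0 y + τ := by
    intro y τ
    simp only [hL0def]
    rw [Finset.sum_congr rfl fun i _ => hLflow i y τ]
    rw [Finset.sum_sub_distrib, Finset.sum_const, Finset.card_univ]
    simp only [Fintype.card_fin, nsmul_eq_mul]
    field_simp
    ring
  have hdS : d ∈ Submodule.span ℝ (Set.range v) :=
    Submodule.smul_mem _ _ (Submodule.sum_mem _ fun i _ =>
      Submodule.subset_span (Set.mem_range_self i))
  have hflow : ∀ y ∈ A, ∀ τ : ℝ, 0 ≤ τ → τ ≤ 1 - u y →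
      y + τ • d ∈ A ∧ u (y + τ • d) = u y + τ := by
    intro y hy τ hτ0 hτ1
    obtain ⟨hyS, hLpos, hL0pos⟩ := (hmemA y).mp hy
    have hne : 1 - u y = n * m y := by simp only [hudef]; ring
    rw [hne] at hτ1
    refine ⟨(hmemA _).mpr ⟨?_, ?_, ?_⟩, huflow y τ⟩
    · rw [hmemS, show y + τ • d - x0 = (y - x0) + τ • d by abel]
      exact add_mem ((hmemS y).mp hyS) (Submodule.smul_mem _ _ hdS)
    · intro i
      rw [hLflow]
      have h9 : τ * (n:ℝ)⁻¹ ≤ m y := by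
        rw [← div_eq_mul_inv, div_le_iff₀ hnpos]
        linarith [hτ1]
      linarith [hmle y i]
    · rw [hL0flow]
      linarith
  have hexit : ∀ y ∈ A, (u y = 1 ↔ y ∈ Q) := by
    intro y hy
    obtain ⟨hyS, hLpos, hL0pos⟩ := (hmemA y).mp hy
    constructor
    · intro h1
      have hm0' : m y = 0 := by
        have h2 : (n:ℝ) * m y = 0 := by
          simp only [hudef] at h1
          linarith
        rcases mul_eq_zero.mp h2 with h | h
        · exact absurd h hn0
        · exact h
      obtain ⟨i, hi⟩ := hmex y
      have hLi0 : L i y = 0 := by rw [← hi, hm0']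
      have hnotA : y ∉ intrinsicInterior ℝ A := by
        intro hc
        have := (hriA y hc).1 i
        rw [hLi0] at this
        exact lt_irrefl _ this
      have hnotB : y ∉ intrinsicInterior ℝ B := by
        intro hc
        have := hriB y hc i
        rw [hLi0] at this
        exact lt_irrefl _ this
      have h3 : y ∈ Q ∩ A := by
        rw [hQA]
        exact ⟨hy, fun hc => hc.elim hnotA hnotB⟩
      exact h3.1
    · intro hyQ
      have h4 : y ∈ A \ (intrinsicInterior ℝ A ∪ intrinsicInterior ℝ B) := by
        rw [← hQA]
        exact ⟨hyQ, hy⟩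
      by_contra h1
      have hmpos : 0 < m y := by
        rcases (hm0 y hy).lt_or_eq with h | h
        · exact h
        · exfalso
          apply h1
          simp only [hudef, ← h]
          ring
      have hLpos' : ∀ i, 0 < L i y := fun i => lt_of_lt_of_le hmpos (hmle y i)
      rcases hL0pos.lt_or_eq with h | h
      · exact h4.2 (Or.inl (hriAof y hy hLpos' h))
      · exact h4.2 (Or.inr (hriBof y hy h.symm hLpos'))
  exact free_core A Q P hAc hQ.isClosed hP d u hu hu0 hu1 hflow hexit
end

section
/- Let x₀, …, xₙ be affinely independent points of E, let A := conv{x₀, …, xₙ}, and let F : E → E' be an affine map. If F is not injective on A, then F(A) = F(∂A), where ∂A := A \ ri A is the relative boundary of A. -/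
open Set

/-- If an affine map `F` is not injective on a simplex `A = conv {x₀, …, xₙ}`, then
`F '' A = F '' ∂A`, where `∂A = A \ ri A` is the relative boundary of `A`. -/
theorem stmt_8 {E E' : Type*}
    [NormedAddCommGroup E] [NormedSpace ℝ E] [FiniteDimensional ℝ E]
    [NormedAddCommGroup E'] [NormedSpace ℝ E'] [FiniteDimensional ℝ E']
    {n : ℕ} (x : Fin (n + 1) → E) (hx : AffineIndependent ℝ x)
    (A : Set E) (hA : A = convexHull ℝ (Set.range x))
    (F : E →ᵃ[ℝ] E') (hF : ¬ Set.InjOn F A) :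
    F '' A = F '' (A \ intrinsicInterior ℝ A) := by
  rw [Set.InjOn] at hF
  push_neg at hF
  obtain ⟨a, ha, b, hb, hFab, hab⟩ := hF
  set v : E := b - a with hv
  have hvne : v ≠ 0 := sub_ne_zero.mpr (Ne.symm hab)
  have hFv : F.linear v = 0 := by
    have h := F.linearMap_vsub b a
    simp only [vsub_eq_sub] at h
    rw [hv, h, hFab, sub_self]
  have hAc : IsCompact A := hA ▸ (Set.finite_range x).isCompact_convexHull (𝕜 := ℝ)
  refine Set.Subset.antisymm ?_ (Set.image_mono Set.diff_subset)
  rintro _ ⟨p, hp, rfl⟩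
  set S : Set ℝ := {t | p + t • v ∈ A} with hSdef
  have hS0 : (0 : ℝ) ∈ S := by simp [hSdef, hp]
  have hScl : IsClosed S := by
    have : Continuous fun t : ℝ => p + t • v := by continuity
    exact hAc.isClosed.preimage this
  obtain ⟨C, hC⟩ := hAc.isBounded.exists_norm_le
  have hSbdd : BddAbove S := by
    refine ⟨(C + ‖p‖) / ‖v‖, fun t ht => ?_⟩
    have h1 : ‖p + t • v‖ ≤ C := hC _ ht
    have h2 : ‖t • v‖ ≤ C + ‖p‖ := by
      have : t • v = (p + t • v) - p := (add_sub_cancel_left p (t • v)).symm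
      calc ‖t • v‖ = ‖(p + t • v) - p‖ := by rw [← this]
        _ ≤ ‖p + t • v‖ + ‖p‖ := norm_sub_le _ _
        _ ≤ C + ‖p‖ := by linarith
    rw [norm_smul, Real.norm_eq_abs] at h2
    have hvpos : 0 < ‖v‖ := norm_pos_iff.mpr hvne
    rw [le_div_iff₀ hvpos]
    calc t * ‖v‖ ≤ |t| * ‖v‖ := by
          exact mul_le_mul_of_nonneg_right (le_abs_self t) hvpos.le
      _ ≤ C + ‖p‖ := h2
  have hSne : S.Nonempty := ⟨0, hS0⟩
  have htS : sSup S ∈ S := hScl.csSup_mem hSne hSbdd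
  set t : ℝ := sSup S with htdef
  set q : E := p + t • v with hq
  have hqA : q ∈ A := htS
  have hqspan : q ∈ affineSpan ℝ A := subset_affineSpan ℝ A hqA
  have hvdir : v ∈ (affineSpan ℝ A).direction := by
    have := AffineSubspace.vsub_mem_direction (subset_affineSpan ℝ A hb)
      (subset_affineSpan ℝ A ha)
    simpa [hv] using this
  have hqb : q ∉ intrinsicInterior ℝ A := by
    intro hqi
    rw [mem_intrinsicInterior] at hqi
    obtain ⟨y, hy, hyq⟩ := hqi
    have hmem : ∀ ε : ℝ, (ε • v + q) ∈ affineSpan ℝ A := fun ε =>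
      AffineSubspace.vadd_mem_of_mem_direction (Submodule.smul_mem _ ε hvdir) hqspan
    set f : ℝ → affineSpan ℝ A := fun ε => ⟨ε • v + q, hmem ε⟩ with hf
    have hfc : Continuous f := by
      apply Continuous.subtype_mk
      continuity
    have hf0 : f 0 = y := by
      apply Subtype.ext
      simp [hf, hyq]
    have hopen : IsOpen (f ⁻¹' interior ((↑) ⁻¹' A : Set (affineSpan ℝ A))) :=
      isOpen_interior.preimage hfc
    have h0mem : (0 : ℝ) ∈ f ⁻¹' interior ((↑) ⁻¹' A : Set (affineSpan ℝ A)) := by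
      simp only [Set.mem_preimage, hf0]; exact hy
    obtain ⟨δ, hδpos, hδ⟩ := Metric.isOpen_iff.mp hopen 0 h0mem
    have hε : f (δ / 2) ∈ interior ((↑) ⁻¹' A : Set (affineSpan ℝ A)) := by
      apply hδ
      rw [Metric.mem_ball, Real.dist_eq, sub_zero, abs_of_pos (half_pos hδpos)]
      linarith
    have hεA : ((δ / 2) • v + q) ∈ A := by
      have := interior_subset hε
      simpa [hf] using this
    have : t + δ / 2 ∈ S := by
      simp only [hSdef, Set.mem_setOf_eq]
      have : p + (t + δ / 2) • v = (δ / 2) • v + q := by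
        rw [hq]; module
      rw [this]; exact hεA
    have := le_csSup hSbdd this
    linarith
  refine ⟨q, ⟨hqA, hqb⟩, ?_⟩
  have : q = t • v +ᵥ p := by rw [hq]; simp [add_comm]
  rw [this, F.map_vadd, LinearMap.map_smul, hFv, smul_zero]
  simp
end

section
/- Let x₀, …, xₙ be affinely independent points of E, let A := conv{x₀, …, xₙ}, and let F : E → E' be an affine map that is not injective on A. Then for every i ∈ {0,…,n}, letting Bᵢ := conv({x₀,…,xₙ} \ {xᵢ}) be the corresponding codimension-one face of A, one has F(A) = F(A \ (ri A ∪ ri Bᵢ)); equivalently, F(A) = F(∂A \ ri Bᵢ). -/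
open Set Finset Topology Filter

section helpers

variable {E : Type*} [NormedAddCommGroup E] [NormedSpace ℝ E]

lemma mem_hull_iff' {ι : Type*} [Fintype ι] (y : ι → E) (z : E) :
    z ∈ convexHull ℝ (Set.range y) ↔
      ∃ w : ι → ℝ, (∀ j, 0 ≤ w j) ∧ ∑ j, w j = 1 ∧ ∑ j, w j • y j = z := by
  rw [convexHull_range_eq_exists_affineCombination]
  constructor
  · rintro ⟨s, w, h0, h1, rfl⟩
    refine ⟨Set.indicator ↑s w, fun j => ?_, ?_, ?_⟩
    · by_cases h : j ∈ s
      · simp [Set.indicator_apply, h, h0 j h]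
      · simp [Set.indicator_apply, h]
    · rw [Finset.sum_indicator_subset _ (Finset.subset_univ s), h1]
    · rw [Finset.affineCombination_indicator_subset w y (Finset.subset_univ s),
        Finset.affineCombination_eq_linear_combination]
      rw [Finset.sum_indicator_subset _ (Finset.subset_univ s), h1]
  · rintro ⟨w, h0, h1, rfl⟩
    exact ⟨Finset.univ, w, fun j _ => h0 j, h1,
      Finset.affineCombination_eq_linear_combination _ _ _ h1⟩

lemma coords_unique' {ι : Type*} [Fintype ι] {y : ι → E} (hy : AffineIndependent ℝ y)
    {w u : ι → ℝ} (hw : ∑ j, w j = 1) (hu : ∑ j, u j = 1)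
    (h : ∑ j, w j • y j = ∑ j, u j • y j) : w = u :=
  (affineIndependent_iff_eq_of_fintype_affineCombination_eq ℝ y).mp hy w u hw hu (by
    rw [Finset.affineCombination_eq_linear_combination _ _ _ hw,
        Finset.affineCombination_eq_linear_combination _ _ _ hu, h])

lemma not_mem_ri_of_zero_coord {ι : Type*} [Fintype ι] {y : ι → E}
    (hy : AffineIndependent ℝ y) {w : ι → ℝ} (h1 : ∑ j, w j = 1)
    {k : ι} (hk : w k = 0) :
    (∑ j, w j • y j) ∉ intrinsicInterior ℝ (convexHull ℝ (Set.range y)) := by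
  classical
  intro hmem
  set s : Set E := convexHull ℝ (Set.range y) with hs
  set p : E := ∑ j, w j • y j with hp
  obtain ⟨z, hz, hzp⟩ := (mem_intrinsicInterior (𝕜 := ℝ)).mp hmem
  have hys : y k ∈ affineSpan ℝ s := subset_affineSpan ℝ s (subset_convexHull ℝ _ ⟨k, rfl⟩)
  have hps : p ∈ affineSpan ℝ s := hzp ▸ z.2
  set c : ℝ → affineSpan ℝ s :=
    fun t => ⟨AffineMap.lineMap (y k) p t, AffineMap.lineMap_mem t hys hps⟩ with hc
  have hcont : Continuous c := by
    apply Continuous.subtype_mk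
    have : Continuous fun t : ℝ => t • (p - y k) + y k := by fun_prop
    exact this.congr fun t => by rw [AffineMap.lineMap_apply, vsub_eq_sub, vadd_eq_add]
  have h1c : c 1 ∈ interior ((↑) ⁻¹' s : Set (affineSpan ℝ s)) := by
    have : c 1 = z := Subtype.ext (by simp [hc, hzp])
    rw [this]; exact hz
  have hev : ∀ᶠ t in 𝓝 (1 : ℝ), c t ∈ interior ((↑) ⁻¹' s : Set (affineSpan ℝ s)) :=
    hcont.continuousAt.eventually_mem (isOpen_interior.mem_nhds h1c)
  obtain ⟨t, htmem, htgt⟩ :=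
    ((hev.filter_mono nhdsWithin_le_nhds).and (self_mem_nhdsWithin
      (s := Set.Ioi (1 : ℝ)))).exists
  have hts : AffineMap.lineMap (y k) p t ∈ s := by
    have h4 : c t ∈ (Subtype.val ⁻¹' s : Set (affineSpan ℝ s)) := interior_subset htmem
    exact h4
  set w' : ι → ℝ := fun j => t * w j + (1 - t) * (if j = k then 1 else 0) with hw'
  have hsum' : ∑ j, w' j = 1 := by
    rw [Finset.sum_add_distrib, ← Finset.mul_sum, ← Finset.mul_sum, h1,
      Finset.sum_ite_eq' Finset.univ k (fun _ => (1 : ℝ))]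
    simp
  have hcomb' : ∑ j, w' j • y j = AffineMap.lineMap (y k) p t := by
    have hterm : ∑ j, w' j • y j
        = (∑ j, t • (w j • y j)) + ∑ j, (if j = k then ((1 : ℝ) - t) • y j else 0) := by
      rw [← Finset.sum_add_distrib]
      refine Finset.sum_congr rfl fun j _ => ?_
      by_cases h : j = k
      · subst h; simp [hw', add_smul, mul_smul]
      · simp [hw', h, mul_smul]
    rw [hterm, ← Finset.smul_sum, Finset.sum_ite_eq' Finset.univ k
      (fun j => ((1 : ℝ) - t) • y j), AffineMap.lineMap_apply_module, ← hp]
    simp [add_comm]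
  obtain ⟨u, hu0, hu1, hucomb⟩ := (mem_hull_iff' y _).mp hts
  have huw := coords_unique' hy hsum' hu1 (by rw [hcomb', hucomb])
  have hwk' : w' k = 1 - t := by simp [hw', hk]
  have h2 : (0 : ℝ) ≤ 1 - t := by
    have h3 := hu0 k
    rw [← huw, hwk'] at h3
    exact h3
  have : (1 : ℝ) < t := htgt
  linarith

lemma exists_shift' {ι : Type*} [Fintype ι] {l μ : ι → ℝ} (hl : ∀ j, 0 ≤ l j)
    (h : ∃ j, μ j < 0) :
    ∃ (t : ℝ) (k : ι), 0 ≤ t ∧ (∀ j, 0 ≤ l j + t * μ j) ∧ l k + t * μ k = 0 ∧ μ k < 0 := by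
  classical
  obtain ⟨j₀, hj₀⟩ := h
  set S : Finset ι := Finset.univ.filter fun j => μ j < 0 with hS'
  have hS : S.Nonempty := ⟨j₀, by simp [hS', hj₀]⟩
  set t := S.inf' hS fun j => l j / (-μ j) with ht
  obtain ⟨k, hkS, hk⟩ := Finset.exists_mem_eq_inf' hS (fun j => l j / (-μ j))
  have hμk : μ k < 0 := by simpa [hS'] using hkS
  have ht0 : 0 ≤ t := Finset.le_inf' hS _ fun j hj =>
    div_nonneg (hl j) (by simp only [hS', Finset.mem_filter] at hj; linarith [hj.2])
  refine ⟨t, k, ht0, ?_, ?_, hμk⟩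
  · intro j
    by_cases hj : μ j < 0
    · have hle : t ≤ l j / (-μ j) :=
        Finset.inf'_le _ (by simp [hS', hj])
      rw [le_div_iff₀ (by linarith)] at hle
      nlinarith
    · push_neg at hj; nlinarith [hl j]
  · have htk : t = l k / (-μ k) := hk
    have hne : -μ k ≠ 0 := by linarith
    rw [htk]
    field_simp
    rw [div_self (ne_of_lt hμk)]; ring

lemma face_zero_coord' {n : ℕ} {x : Fin (n + 1) → E} (hx : AffineIndependent ℝ x)
    {i : Fin (n + 1)} {w : Fin (n + 1) → ℝ} (hw1 : ∑ j, w j = 1)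
    (hz : (∑ j, w j • x j) ∈ intrinsicInterior ℝ (convexHull ℝ (x '' {j | j ≠ i})))
    {k : Fin (n + 1)} (hk : w k = 0) : k = i := by
  classical
  set y : {j : Fin (n + 1) // j ≠ i} → E := fun j => x j with hy'
  have hrange : x '' {j | j ≠ i} = Set.range y := by
    ext z
    constructor
    · rintro ⟨a, ha, rfl⟩; exact ⟨⟨a, ha⟩, rfl⟩
    · rintro ⟨⟨a, ha⟩, rfl⟩; exact ⟨a, ha, rfl⟩
  have hy : AffineIndependent ℝ y := hx.comp_embedding (Function.Embedding.subtype _)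
  rw [hrange] at hz
  have hzmem : (∑ j, w j • x j) ∈ convexHull ℝ (Set.range y) := intrinsicInterior_subset hz
  obtain ⟨u, hu0, hu1, hucomb⟩ := (mem_hull_iff' y _).mp hzmem
  set w' : Fin (n + 1) → ℝ := fun j => if h : j = i then 0 else u ⟨j, h⟩ with hw'
  have hmem_iff : ∀ j : Fin (n + 1), j ∈ Finset.univ.erase i ↔ j ≠ i := by
    intro j; simp [Finset.mem_erase]
  have heq : ∀ j : {j : Fin (n + 1) // j ≠ i}, w' ↑j = u j := fun j => by
    simp [hw', j.2]
  have hsum' : ∑ j, w' j = 1 := by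
    rw [← Finset.sum_erase_add _ _ (Finset.mem_univ i),
      Finset.sum_subtype (Finset.univ.erase i) hmem_iff w']
    · simp only [heq]
      simp [hw', hu1]
    · infer_instance
  have heq2 : ∀ j : {j : Fin (n + 1) // j ≠ i}, w' ↑j • x ↑j = u j • y j := fun j => by
    simp [hw', hy', j.2]
  have hcomb' : ∑ j, w' j • x j = ∑ j, u j • y j := by
    rw [← Finset.sum_erase_add _ _ (Finset.mem_univ i),
      Finset.sum_subtype (Finset.univ.erase i) hmem_iff (fun j => w' j • x j)]
    · simp only [heq2]
      simp [hw']
    · infer_instance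
  have huw : w = w' := coords_unique' hx hw1 hsum' (by rw [hcomb', hucomb])
  by_contra hki
  have hu_k : u ⟨k, hki⟩ = 0 := by
    have := congrFun huw k
    rw [hk] at this
    simp [hw', hki] at this
    exact this.symm
  exact not_mem_ri_of_zero_coord hy hu1 hu_k (hucomb ▸ hz)

end helpers

/-- If an affine map `F` is not injective on the simplex `A = conv {x₀, …, xₙ}`, then for
every codimension-one face `Bᵢ = conv ({x₀, …, xₙ} \ {xᵢ})` one has
`F '' A = F '' (A \ (ri A ∪ ri Bᵢ))`, i.e. `F '' A = F '' (∂A \ ri Bᵢ)`. -/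
theorem stmt_9 {E E' : Type*}
    [NormedAddCommGroup E] [NormedSpace ℝ E] [FiniteDimensional ℝ E]
    [NormedAddCommGroup E'] [NormedSpace ℝ E'] [FiniteDimensional ℝ E']
    {n : ℕ} (x : Fin (n + 1) → E) (hx : AffineIndependent ℝ x)
    (A : Set E) (hA : A = convexHull ℝ (Set.range x))
    (F : E →ᵃ[ℝ] E') (hF : ¬ Set.InjOn F A) :
    ∀ i : Fin (n + 1),
      F '' A =
        F '' (A \ (intrinsicInterior ℝ A ∪
          intrinsicInterior ℝ (convexHull ℝ (x '' {j | j ≠ i})))) := by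
  classical
  subst hA
  rw [Set.InjOn] at hF
  push_neg at hF
  obtain ⟨a, ha, b, hb, hab, hne⟩ := hF
  obtain ⟨α, hα0, hα1, hαc⟩ := (mem_hull_iff' x a).mp ha
  obtain ⟨β, hβ0, hβ1, hβc⟩ := (mem_hull_iff' x b).mp hb
  set μ : Fin (n + 1) → ℝ := fun j => β j - α j with hμ
  have hμsum : ∑ j, μ j = 0 := by
    simp [hμ, Finset.sum_sub_distrib, hα1, hβ1]
  have hμne : μ ≠ 0 := by
    intro h
    apply hne
    have : α = β := by funext j; have := congrFun h j; simp [hμ] at this; linarith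
    rw [← hαc, ← hβc, this]
  have hμneg : ∃ j, μ j < 0 := by
    by_contra h
    push_neg at h
    apply hμne
    funext j
    have := (Finset.sum_eq_zero_iff_of_nonneg (fun j _ => h j)).mp hμsum j (Finset.mem_univ j)
    simpa using this
  have hμpos : ∃ j, 0 < μ j := by
    by_contra h
    push_neg at h
    apply hμne
    funext j
    have h' : ∀ j ∈ Finset.univ, 0 ≤ -μ j := fun j _ => by linarith [h j]
    have hsum' : ∑ j, -μ j = 0 := by simp [hμsum]
    have := (Finset.sum_eq_zero_iff_of_nonneg h').mp hsum' j (Finset.mem_univ j)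
    simp only [Pi.zero_apply]
    linarith
  have hdir : ∑ j, μ j • x j = b - a := by
    simp [hμ, sub_smul, Finset.sum_sub_distrib, hαc, hβc]
  have hFdir : F.linear (b - a) = 0 := by
    have h1 := F.linearMap_vsub b a
    rw [vsub_eq_sub, vsub_eq_sub] at h1
    rw [h1, hab, sub_self]
  intro i
  apply Set.Subset.antisymm ?_ (Set.image_mono Set.diff_subset)
  rintro _ ⟨p, hp, rfl⟩
  obtain ⟨l, hl0, hl1, hlc⟩ := (mem_hull_iff' x p).mp hp
  -- generic facts about shifted combinations
  have hq_eq : ∀ t : ℝ, ∑ j, (l j + t * μ j) • x j = p + t • (b - a) := by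
    intro t
    simp only [add_smul, mul_smul, Finset.sum_add_distrib, ← Finset.smul_sum, hdir, hlc]
  have hq_sum : ∀ t : ℝ, ∑ j, (l j + t * μ j) = 1 := by
    intro t
    rw [Finset.sum_add_distrib, ← Finset.mul_sum, hμsum, hl1]
    ring
  have hFq : ∀ t : ℝ, F (p + t • (b - a)) = F p := by
    intro t
    have : p + t • (b - a) = t • (b - a) +ᵥ p := by
      simp [vadd_eq_add, add_comm]
    rw [this, AffineMap.map_vadd, map_smul, hFdir, smul_zero]
    simp
  -- first shift, direction μ
  obtain ⟨t, k, ht0, hw0, hwk, hμk⟩ := exists_shift' hl0 hμneg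
  set q : E := ∑ j, (l j + t * μ j) • x j with hq
  have hqA : q ∈ convexHull ℝ (Set.range x) :=
    (mem_hull_iff' x q).mpr ⟨_, hw0, hq_sum t, rfl⟩
  have hqF : F q = F p := by rw [hq, hq_eq t, hFq t]
  have hqriA : q ∉ intrinsicInterior ℝ (convexHull ℝ (Set.range x)) :=
    not_mem_ri_of_zero_coord hx (hq_sum t) hwk
  by_cases hqB : q ∈ intrinsicInterior ℝ (convexHull ℝ (x '' {j | j ≠ i}))
  · -- then k = i, so μ i < 0; use the opposite direction
    have hki : k = i := face_zero_coord' hx (hq_sum t) hqB hwk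
    have hμi : μ i < 0 := hki ▸ hμk
    obtain ⟨t', k', ht0', hw0', hwk', hμk'⟩ := exists_shift' hl0
      (by obtain ⟨j, hj⟩ := hμpos; exact ⟨j, show -μ j < 0 from neg_lt_zero.mpr hj⟩ :
        ∃ j, (-μ) j < 0)
    have hre : ∀ j, l j + t' * (-μ) j = l j + (-t') * μ j := by
      intro j; show l j + t' * (-μ j) = l j + (-t') * μ j; ring
    set q' : E := ∑ j, (l j + (-t') * μ j) • x j with hq'
    have hq'A : q' ∈ convexHull ℝ (Set.range x) :=
      (mem_hull_iff' x q').mpr ⟨_, fun j => (hre j) ▸ hw0' j, hq_sum (-t'), rfl⟩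
    have hq'F : F q' = F p := by rw [hq', hq_eq (-t'), hFq (-t')]
    have hwk'2 : l k' + (-t') * μ k' = 0 := (hre k') ▸ hwk'
    have hq'riA : q' ∉ intrinsicInterior ℝ (convexHull ℝ (Set.range x)) :=
      not_mem_ri_of_zero_coord hx (hq_sum (-t')) hwk'2
    have hq'riB : q' ∉ intrinsicInterior ℝ (convexHull ℝ (x '' {j | j ≠ i})) := by
      intro h
      have : k' = i := face_zero_coord' hx (hq_sum (-t')) h hwk'2
      rw [this] at hμk'
      simp [Pi.neg_apply] at hμk'
      linarith
    exact ⟨q', ⟨hq'A, fun h => h.elim hq'riA hq'riB⟩, hq'F⟩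
  · exact ⟨q, ⟨hqA, fun h => h.elim hqriA hqB⟩, hqF⟩
end
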